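/- Let 1 ≤ j ≤ k ≤ dim E. There exists a constant c > 1 such that for every j-dimensional subspace U ⊆ E and every k-dimensional subspace V ⊆ E one has (1/c)·dist(V, Gr_k(E)_U) ≤ δ(U, V) ≤ c·dist(V, Gr_k(E)_U). -/

import Mathlib

open Module Submodule

noncomputable section

variable {E : Type*} [NormedAddCommGroup E] [InnerProductSpace ℝ E] [FiniteDimensional ℝ E]

/-- The orthogonal projection onto a subspace `U`, viewed as a continuous linear
endomorphism of `E`. -/
noncomputable def projCLM (U : Submodule ℝ E) : E →L[ℝ] E :=
  U.subtypeL.comp (orthogonalProjection U)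

/-- The gap `δ(U,V) := ‖P_U - P_V ∘ P_U‖` between two subspaces. -/
noncomputable def gap (U V : Submodule ℝ E) : ℝ :=
  ‖projCLM U - (projCLM V).comp (projCLM U)‖

open RealInnerProductSpace

lemma projCLM_apply (U : Submodule ℝ E) (x : E) :
    projCLM U x = (orthogonalProjection U x : E) := rfl

lemma projCLM_mem (U : Submodule ℝ E) (x : E) : projCLM U x ∈ U :=
  (orthogonalProjection U x).2

lemma projCLM_eq_self (U : Submodule ℝ E) {x : E} (h : x ∈ U) : projCLM U x = x :=
  (starProjection_eq_self_iff (K := U)).2 h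

lemma norm_projCLM_apply_le (U : Submodule ℝ E) (x : E) : ‖projCLM U x‖ ≤ ‖x‖ := by
  have h := (orthogonalProjection U).le_opNorm x
  calc ‖projCLM U x‖ = ‖orthogonalProjection U x‖ := rfl
    _ ≤ ‖orthogonalProjection U‖ * ‖x‖ := h
    _ ≤ 1 * ‖x‖ := by
        gcongr; exact orthogonalProjection_norm_le U
    _ = ‖x‖ := one_mul _

lemma norm_projCLM_le (U : Submodule ℝ E) : ‖projCLM U‖ ≤ 1 :=
  ContinuousLinearMap.opNorm_le_bound _ zero_le_one
    (fun x => by simpa using norm_projCLM_apply_le U x)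

lemma projCLM_comp_of_le {U L : Submodule ℝ E} (h : U ≤ L) :
    (projCLM L).comp (projCLM U) = projCLM U := by
  ext x
  exact projCLM_eq_self L (h (projCLM_mem U x))

lemma norm_sub_projCLM_le_gap {U : Submodule ℝ E} (V : Submodule ℝ E) {u : E} (hu : u ∈ U) :
    ‖u - projCLM V u‖ ≤ gap U V * ‖u‖ := by
  have h : u - projCLM V u = (projCLM U - (projCLM V).comp (projCLM U)) u := by
    simp [projCLM_eq_self U hu]
  rw [h]
  exact (projCLM U - (projCLM V).comp (projCLM U)).le_opNorm u

lemma gap_le_norm_sub {U L : Submodule ℝ E} (V : Submodule ℝ E) (h : U ≤ L) :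
    gap U V ≤ ‖projCLM V - projCLM L‖ := by
  have key : projCLM U - (projCLM V).comp (projCLM U)
      = (projCLM L - projCLM V).comp (projCLM U) := by
    rw [ContinuousLinearMap.sub_comp, projCLM_comp_of_le h]
  calc gap U V = ‖(projCLM L - projCLM V).comp (projCLM U)‖ := by rw [gap, key]
    _ ≤ ‖projCLM L - projCLM V‖ * ‖projCLM U‖ := ContinuousLinearMap.opNorm_comp_le _ _
    _ ≤ ‖projCLM L - projCLM V‖ * 1 :=
        mul_le_mul_of_nonneg_left (norm_projCLM_le U) (norm_nonneg _)
    _ = ‖projCLM V - projCLM L‖ := by rw [mul_one, norm_sub_rev]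

lemma norm_sub_projCLM_le (L : Submodule ℝ E) (y : E) {x : E} (hx : x ∈ L) :
    ‖y - projCLM L y‖ ≤ ‖y - x‖ := by
  rw [show projCLM L y = L.starProjection y from rfl, starProjection_minimal]
  exact ciInf_le ⟨0, by rintro r ⟨z, rfl⟩; exact norm_nonneg _⟩ (⟨x, hx⟩ : L)

lemma norm_comp_comm (V L : Submodule ℝ E) :
    ‖(projCLM L).comp (ContinuousLinearMap.id ℝ E - projCLM V)‖ =
      ‖(ContinuousLinearMap.id ℝ E - projCLM V).comp (projCLM L)‖ := by
  have h1 : IsSelfAdjoint (projCLM L) := isSelfAdjoint_starProjection L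
  have h2 : IsSelfAdjoint (ContinuousLinearMap.id ℝ E - projCLM V) := by
    have h1' : IsSelfAdjoint (1 : E →L[ℝ] E) := IsSelfAdjoint.one _
    exact h1'.sub (isSelfAdjoint_starProjection V)
  have := ContinuousLinearMap.adjoint.norm_map
    ((ContinuousLinearMap.id ℝ E - projCLM V).comp (projCLM L))
  rw [ContinuousLinearMap.adjoint_comp, h1.adjoint_eq, h2.adjoint_eq] at this
  exact this


lemma exists_superset_finrank_eq (m : ℕ) (U : Submodule ℝ E) (hU : finrank ℝ U ≤ m)
    (hm : m ≤ finrank ℝ E) : ∃ L : Submodule ℝ E, U ≤ L ∧ finrank ℝ L = m := by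
  induction m with
  | zero => exact ⟨U, le_rfl, Nat.le_zero.mp hU⟩
  | succ n ih =>
    rcases eq_or_lt_of_le hU with h | h
    · exact ⟨U, le_rfl, h⟩
    · obtain ⟨L, hUL, hL⟩ := ih (Nat.lt_succ_iff.mp h) (le_trans (Nat.le_succ n) hm)
      have hne : L ≠ ⊤ := by
        intro ht
        rw [ht, finrank_top] at hL
        omega
      obtain ⟨x, -, hx⟩ := SetLike.exists_of_lt (show L < ⊤ from Ne.lt_top hne)
      have hx0 : x ≠ 0 := fun h0 => hx (h0 ▸ L.zero_mem)
      have hdis : L ⊓ (ℝ ∙ x) = ⊥ := by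
        rw [eq_bot_iff]
        rintro y ⟨hyL, hyS⟩
        obtain ⟨c, rfl⟩ := Submodule.mem_span_singleton.mp hyS
        rcases eq_or_ne c 0 with rfl | hc
        · simp
        · exact absurd (by simpa [smul_smul, inv_mul_cancel₀ hc] using L.smul_mem c⁻¹ hyL) hx
      refine ⟨L ⊔ (ℝ ∙ x), le_trans hUL le_sup_left, ?_⟩
      have := Submodule.finrank_sup_add_finrank_inf_eq L (ℝ ∙ x)
      rw [hdis, finrank_bot, finrank_span_singleton hx0, hL] at this
      omega

lemma finrank_map_projCLM_eq {V U : Submodule ℝ E}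
    (h : ∀ x ∈ U, projCLM V x = 0 → x = 0) :
    finrank ℝ (U.map (projCLM V : E →ₗ[ℝ] E)) = finrank ℝ U := by
  rw [← LinearMap.range_domRestrict]
  apply LinearMap.finrank_range_of_inj
  intro a b hab
  have hmem : ((a : E) - b) ∈ U := U.sub_mem a.2 b.2
  have hz : projCLM V ((a : E) - b) = 0 := by
    have : projCLM V (a : E) = projCLM V (b : E) := hab
    rw [map_sub, this, sub_self]
  have := h _ hmem hz
  exact Subtype.ext (sub_eq_zero.mp this)

lemma key_lemma (j k : ℕ) (hjk : j ≤ k) (U V : Submodule ℝ E)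
    (hU : finrank ℝ U = j) (hV : finrank ℝ V = k) (hδ : gap U V ≤ 1/4) :
    ∃ L : Submodule ℝ E, finrank ℝ L = k ∧ U ≤ L ∧
      ‖projCLM V - projCLM L‖ ≤ 6 * gap U V := by
  set δ := gap U V with hδdef
  have hδ0 : 0 ≤ δ := norm_nonneg _
  have hinjU : ∀ x ∈ U, projCLM V x = 0 → x = 0 := by
    intro x hx h0
    have h1 : ‖x - projCLM V x‖ ≤ δ * ‖x‖ := norm_sub_projCLM_le_gap V hx
    rw [h0, sub_zero] at h1
    have h2 : ‖x‖ = 0 := by nlinarith [norm_nonneg x]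
    exact norm_eq_zero.mp h2
  set U' : Submodule ℝ E := U.map (projCLM V : E →ₗ[ℝ] E) with hU'def
  have hU'fin : finrank ℝ U' = j := by rw [hU'def, finrank_map_projCLM_eq hinjU, hU]
  have hU'V : U' ≤ V := by
    rintro y ⟨x, hx, rfl⟩
    simpa using projCLM_mem V x
  set W : Submodule ℝ E := U'ᗮ ⊓ V with hWdef
  have hWfin : finrank ℝ W = k - j := by
    apply Submodule.finrank_add_inf_finrank_orthogonal' hU'V
    rw [hU'fin, hV]; omega
  set L : Submodule ℝ E := U ⊔ W with hLdef
  have hUL : U ≤ L := le_sup_left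
  have hUW : U ⊓ W = ⊥ := by
    rw [eq_bot_iff]
    rintro y ⟨hyU, hyW⟩
    obtain ⟨hyO, hyV⟩ := hyW
    have h1 : projCLM V y = y := projCLM_eq_self V hyV
    have h2 : projCLM V y ∈ U' := ⟨y, hyU, by simp⟩
    have h3 : ⟪projCLM V y, y⟫ = 0 := (Submodule.mem_orthogonal _ _).mp hyO _ h2
    rw [h1, real_inner_self_eq_norm_sq] at h3
    have : y = 0 := norm_eq_zero.mp (by nlinarith [norm_nonneg y])
    simp [this]
  have hLfin : finrank ℝ L = k := by
    have h := Submodule.finrank_sup_add_finrank_inf_eq U W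
    rw [hUW, finrank_bot, hU, hWfin] at h
    rw [hLdef]
    omega
  -- (A) vectors in L are close to V
  have hA : ∀ x ∈ L, ‖x - projCLM V x‖ ≤ 2 * δ * ‖x‖ := by
    intro x hx
    obtain ⟨u, hu, w, hw, rfl⟩ := Submodule.mem_sup.mp hx
    have hwV : w ∈ V := hw.2
    have hwO : w ∈ U'ᗮ := hw.1
    have hPw : projCLM V w = w := projCLM_eq_self V hwV
    have hsub : (u + w) - projCLM V (u + w) = u - projCLM V u := by
      rw [map_add, hPw]; abel
    have h2 : ‖u - projCLM V u‖ ≤ δ * ‖u‖ := norm_sub_projCLM_le_gap V hu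
    have h3 : ⟪projCLM V u, w⟫ = 0 := by
      have hmem : projCLM V u ∈ U' := ⟨u, hu, by simp⟩
      exact (Submodule.mem_orthogonal _ _).mp hwO _ hmem
    have h4 : ⟪u, w⟫ = ⟪u - projCLM V u, w⟫ := by
      rw [inner_sub_left, h3, sub_zero]
    have h5 : |⟪u, w⟫| ≤ δ * ‖u‖ * ‖w‖ := by
      rw [h4]
      calc |⟪u - projCLM V u, w⟫| ≤ ‖u - projCLM V u‖ * ‖w‖ := abs_real_inner_le_norm _ _
        _ ≤ δ * ‖u‖ * ‖w‖ := mul_le_mul_of_nonneg_right h2 (norm_nonneg w)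
    have h5' := abs_le.mp h5
    have h6 : ‖u + w‖^2 = ‖u‖^2 + 2*⟪u,w⟫ + ‖w‖^2 := norm_add_sq_real u w
    have h7 : ‖u‖^2 ≤ 2 * ‖u + w‖^2 := by
      nlinarith [sq_nonneg (‖u‖ - ‖w‖),
        mul_le_mul_of_nonneg_right hδ (mul_nonneg (norm_nonneg u) (norm_nonneg w)),
        mul_nonneg (norm_nonneg u) (norm_nonneg w)]
    have h8 : ‖(u+w) - projCLM V (u+w)‖^2 ≤ (2*δ*‖u+w‖)^2 := by
      rw [hsub]
      nlinarith [mul_le_mul h2 h2 (norm_nonneg _) (mul_nonneg hδ0 (norm_nonneg u)),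
        mul_le_mul_of_nonneg_left h7 (sq_nonneg δ),
        mul_nonneg (mul_nonneg hδ0 hδ0) (sq_nonneg ‖u+w‖)]
    have := le_of_pow_le_pow_left₀ two_ne_zero
      (by positivity : (0:ℝ) ≤ 2*δ*‖u+w‖) h8
    exact this
  -- lower bound for P_V on L
  have hlow : ∀ x ∈ L, ‖x‖ ≤ 2 * ‖projCLM V x‖ := by
    intro x hx
    have h1 := hA x hx
    have hx' : x = projCLM V x + (x - projCLM V x) := by abel
    have h2 : ‖x‖ ≤ ‖projCLM V x‖ + ‖x - projCLM V x‖ := by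
      calc ‖x‖ = ‖projCLM V x + (x - projCLM V x)‖ := by rw [← hx']
        _ ≤ _ := norm_add_le _ _
    nlinarith [norm_nonneg x, mul_le_mul_of_nonneg_right hδ (norm_nonneg x)]
  have hinjL : ∀ x ∈ L, projCLM V x = 0 → x = 0 := by
    intro x hx h0
    have h1 := hlow x hx
    rw [h0, norm_zero] at h1
    exact norm_le_zero_iff.mp (by linarith)
  have hmapL : L.map (projCLM V : E →ₗ[ℝ] E) = V := by
    apply Submodule.eq_of_le_of_finrank_eq
    · rintro y ⟨x, hx, rfl⟩
      simpa using projCLM_mem V x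
    · rw [finrank_map_projCLM_eq hinjL, hLfin, hV]
  -- (B) vectors in V are close to L
  have hB : ∀ v ∈ V, ‖v - projCLM L v‖ ≤ 4 * δ * ‖v‖ := by
    intro v hv
    rw [← hmapL] at hv
    obtain ⟨x, hx, rfl⟩ := hv
    simp only [ContinuousLinearMap.coe_coe]
    have hxv : ‖x‖ ≤ 2 * ‖projCLM V x‖ := hlow x hx
    have h1 : ‖projCLM V x - projCLM L (projCLM V x)‖ ≤ ‖projCLM V x - x‖ :=
      norm_sub_projCLM_le L _ hx
    have h2 : ‖projCLM V x - x‖ ≤ 2 * δ * ‖x‖ := by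
      rw [norm_sub_rev]; exact hA x hx
    calc ‖projCLM V x - projCLM L (projCLM V x)‖ ≤ 2 * δ * ‖x‖ := le_trans h1 h2
      _ ≤ 2 * δ * (2 * ‖projCLM V x‖) :=
          mul_le_mul_of_nonneg_left hxv (by positivity)
      _ = 4 * δ * ‖projCLM V x‖ := by ring
  refine ⟨L, hLfin, hUL, ?_⟩
  have hdecomp : projCLM V - projCLM L =
      (ContinuousLinearMap.id ℝ E - projCLM L).comp (projCLM V)
        - (projCLM L).comp (ContinuousLinearMap.id ℝ E - projCLM V) := by
    ext x
    simp only [ContinuousLinearMap.sub_apply, ContinuousLinearMap.comp_apply,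
      ContinuousLinearMap.id_apply, map_sub]
    abel
  have hn1 : ‖(ContinuousLinearMap.id ℝ E - projCLM L).comp (projCLM V)‖ ≤ 4 * δ := by
    apply ContinuousLinearMap.opNorm_le_bound _ (by positivity)
    intro x
    have h1 : ‖projCLM V x - projCLM L (projCLM V x)‖ ≤ 4*δ*‖projCLM V x‖ :=
      hB _ (projCLM_mem V x)
    calc ‖((ContinuousLinearMap.id ℝ E - projCLM L).comp (projCLM V)) x‖
        = ‖projCLM V x - projCLM L (projCLM V x)‖ := by
          simp [ContinuousLinearMap.sub_apply, ContinuousLinearMap.comp_apply]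
      _ ≤ 4*δ*‖projCLM V x‖ := h1
      _ ≤ 4*δ*‖x‖ := mul_le_mul_of_nonneg_left (norm_projCLM_apply_le V x) (by positivity)
  have hn2 : ‖(projCLM L).comp (ContinuousLinearMap.id ℝ E - projCLM V)‖ ≤ 2 * δ := by
    rw [norm_comp_comm]
    apply ContinuousLinearMap.opNorm_le_bound _ (by positivity)
    intro x
    have h1 : ‖projCLM L x - projCLM V (projCLM L x)‖ ≤ 2*δ*‖projCLM L x‖ :=
      hA _ (projCLM_mem L x)
    calc ‖((ContinuousLinearMap.id ℝ E - projCLM V).comp (projCLM L)) x‖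
        = ‖projCLM L x - projCLM V (projCLM L x)‖ := by
          simp [ContinuousLinearMap.sub_apply, ContinuousLinearMap.comp_apply]
      _ ≤ 2*δ*‖projCLM L x‖ := h1
      _ ≤ 2*δ*‖x‖ := mul_le_mul_of_nonneg_left (norm_projCLM_apply_le L x) (by positivity)
  calc ‖projCLM V - projCLM L‖
      ≤ ‖(ContinuousLinearMap.id ℝ E - projCLM L).comp (projCLM V)‖
        + ‖(projCLM L).comp (ContinuousLinearMap.id ℝ E - projCLM V)‖ := by
        rw [hdecomp]; exact norm_sub_le _ _
    _ ≤ 4*δ + 2*δ := add_le_add hn1 hn2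
    _ = 6 * δ := by ring


/-- Let `1 ≤ j ≤ k ≤ dim E`.  There is a constant `c > 1` such that for every
`j`-dimensional subspace `U` and every `k`-dimensional subspace `V`,
`(1/c)·dist(V, Gr_k(E)_U) ≤ δ(U,V) ≤ c·dist(V, Gr_k(E)_U)`, where
`dist(V, Gr_k(E)_U) = inf { ‖P_V - P_L‖ : dim L = k, U ⊆ L }`. -/
theorem gap_comparable_dist_to_flag (j k : ℕ) (hj : 1 ≤ j) (hjk : j ≤ k)
    (hk : k ≤ finrank ℝ E) :
    ∃ c : ℝ, 1 < c ∧
      ∀ U V : Submodule ℝ E, finrank ℝ U = j → finrank ℝ V = k →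
        (1 / c) * sInf {r : ℝ | ∃ L : Submodule ℝ E,
              finrank ℝ L = k ∧ U ≤ L ∧ r = ‖projCLM V - projCLM L‖}
            ≤ gap U V ∧
          gap U V ≤ c * sInf {r : ℝ | ∃ L : Submodule ℝ E,
              finrank ℝ L = k ∧ U ≤ L ∧ r = ‖projCLM V - projCLM L‖} := by
  refine ⟨8, by norm_num, ?_⟩
  intro U V hU hV
  set S : Set ℝ := {r : ℝ | ∃ L : Submodule ℝ E,
      finrank ℝ L = k ∧ U ≤ L ∧ r = ‖projCLM V - projCLM L‖} with hS
  obtain ⟨L₀, hUL₀, hL₀⟩ := exists_superset_finrank_eq k U (hU ▸ hjk) hk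
  have hS_ne : S.Nonempty := ⟨_, L₀, hL₀, hUL₀, rfl⟩
  have hS_bdd : BddBelow S := ⟨0, by rintro r ⟨L, -, -, rfl⟩; exact norm_nonneg _⟩
  have h_lb : ∀ r ∈ S, gap U V ≤ r := by
    rintro r ⟨L, -, hUL, rfl⟩
    exact gap_le_norm_sub V hUL
  have h_le : gap U V ≤ sInf S := le_csInf hS_ne h_lb
  have hg0 : 0 ≤ gap U V := norm_nonneg _
  constructor
  · by_cases hc : gap U V ≤ 1/4
    · obtain ⟨L, hLfin, hUL, hL6⟩ := key_lemma j k hjk U V hU hV hc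
      have h6 : sInf S ≤ 6 * gap U V :=
        le_trans (csInf_le hS_bdd ⟨L, hLfin, hUL, rfl⟩) hL6
      linarith
    · push_neg at hc
      have h2 : ‖projCLM V - projCLM L₀‖ ≤ 2 := by
        calc ‖projCLM V - projCLM L₀‖ ≤ ‖projCLM V‖ + ‖projCLM L₀‖ := norm_sub_le _ _
          _ ≤ 1 + 1 := add_le_add (norm_projCLM_le V) (norm_projCLM_le L₀)
          _ = 2 := by norm_num
      have hS2 : sInf S ≤ 2 := le_trans (csInf_le hS_bdd ⟨L₀, hL₀, hUL₀, rfl⟩) h2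
      linarith
  · linarith
end
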